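/- Let T ≥ 2 be an integer, let 1 ≤ s ≤ r < e ≤ T be integers, and let f ∈ ℝ^T have exactly one change-point r on [s,e] with values μ₁, μ₂ and jump magnitude Δ. Then for every integer b with s ≤ b < e, ‖ψ^b_{s,e}·⟨f, ψ^b_{s,e}⟩ − ψ^r_{s,e}·⟨f, ψ^r_{s,e}⟩‖₂² = (f̃^r_{s,e})² − (f̃^b_{s,e})². -/

import Mathlib

open Real Finset

/-- CUSUM statistic of `x` at `b` over the interval `[s, e]`. -/
noncomputable def cusum (x : ℕ → ℝ) (s b e : ℕ) : ℝ :=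
  Real.sqrt (((e : ℝ) - b) / (((e : ℝ) - s + 1) * ((b : ℝ) - s + 1))) *
      (∑ t ∈ Finset.Icc s b, x t) -
    Real.sqrt (((b : ℝ) - s + 1) / (((e : ℝ) - s + 1) * ((e : ℝ) - b))) *
      (∑ t ∈ Finset.Icc (b + 1) e, x t)

/-- The contrast vector `ψ^b_{s,e}`, given coordinatewise as a function of `t`. -/
noncomputable def psi (s b e t : ℕ) : ℝ :=
  if s ≤ t ∧ t ≤ b then
    Real.sqrt (((e : ℝ) - b) / (((e : ℝ) - s + 1) * ((b : ℝ) - s + 1)))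
  else if b + 1 ≤ t ∧ t ≤ e then
    -Real.sqrt (((b : ℝ) - s + 1) / (((e : ℝ) - s + 1) * ((e : ℝ) - b)))
  else 0

/-- Euclidean inner product on `ℝ^T`, with coordinates indexed by `1, …, T`. -/
noncomputable def innerT (T : ℕ) (x y : ℕ → ℝ) : ℝ := ∑ t ∈ Finset.Icc 1 T, x t * y t

/-- Squared Euclidean norm on `ℝ^T`, with coordinates indexed by `1, …, T`. -/
noncomputable def normSqT (T : ℕ) (x : ℕ → ℝ) : ℝ := ∑ t ∈ Finset.Icc 1 T, (x t) ^ 2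


lemma psi_left {s b e t : ℕ} (h1 : s ≤ t) (h2 : t ≤ b) :
    psi s b e t = Real.sqrt (((e : ℝ) - b) / (((e : ℝ) - s + 1) * ((b : ℝ) - s + 1))) := by
  simp [psi, h1, h2]

lemma psi_right {s b e t : ℕ} (h1 : b + 1 ≤ t) (h2 : t ≤ e) :
    psi s b e t = -Real.sqrt (((b : ℝ) - s + 1) / (((e : ℝ) - s + 1) * ((e : ℝ) - b))) := by
  have : ¬ (s ≤ t ∧ t ≤ b) := by omega
  simp [psi, this, h1, h2]

lemma psi_zero {s b e t : ℕ} (hsb : s ≤ b) (hbe : b ≤ e) (h : t < s ∨ e < t) :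
    psi s b e t = 0 := by
  have h1 : ¬ (s ≤ t ∧ t ≤ b) := by omega
  have h2 : ¬ (b + 1 ≤ t ∧ t ≤ e) := by omega
  simp only [psi, if_neg h1, if_neg h2]

lemma sum_restrict (T s b e : ℕ) (hs : 1 ≤ s) (hsb : s ≤ b) (hbe : b ≤ e) (heT : e ≤ T)
    (x : ℕ → ℝ) :
    ∑ t ∈ Finset.Icc 1 T, x t * psi s b e t = ∑ t ∈ Finset.Icc s e, x t * psi s b e t := by
  refine (Finset.sum_subset (Finset.Icc_subset_Icc hs heT) ?_).symm
  intro t ht hnt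
  simp only [Finset.mem_Icc] at ht hnt
  rw [psi_zero hsb hbe (by omega), mul_zero]

lemma sum_split {s e : ℕ} (u : ℕ) (hsu : s ≤ u) (hue : u ≤ e) (g : ℕ → ℝ) :
    ∑ t ∈ Finset.Icc s e, g t =
      ∑ t ∈ Finset.Icc s u, g t + ∑ t ∈ Finset.Icc (u + 1) e, g t := by
  have hU : Finset.Icc s e = Finset.Icc s u ∪ Finset.Icc (u + 1) e := by
    ext t
    simp only [Finset.mem_Icc, Finset.mem_union]
    omega
  rw [hU, Finset.sum_union]
  rw [Finset.disjoint_left]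
  intro t ht ht'
  simp only [Finset.mem_Icc] at ht ht'
  omega

lemma sum_const_Icc (u v : ℕ) (huv : u ≤ v) (C : ℝ) :
    ∑ _t ∈ Finset.Icc u v, C = ((v : ℝ) - u + 1) * C := by
  rw [Finset.sum_const, Nat.card_Icc, nsmul_eq_mul]
  congr 1
  push_cast [Nat.cast_sub (by omega : u ≤ v + 1)]
  ring


lemma sqrt_fact1 (L p q : ℝ) (hp : 0 < p) (hq : 0 < q) (hpq : p + q = L) :
    Real.sqrt (q / (L * p)) * p = Real.sqrt (p / (L * q)) * q := by
  have hL : 0 < L := by linarith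
  rw [show Real.sqrt (q / (L * p)) * p = Real.sqrt (q / (L * p) * p ^ 2) by
        rw [Real.sqrt_mul (by positivity), Real.sqrt_sq hp.le],
      show Real.sqrt (p / (L * q)) * q = Real.sqrt (p / (L * q) * q ^ 2) by
        rw [Real.sqrt_mul (by positivity), Real.sqrt_sq hq.le]]
  congr 1
  field_simp

lemma sqrt_fact3 (L p q : ℝ) (hp : 0 < p) (hq : 0 < q) (hpq : p + q = L) :
    Real.sqrt (q / (L * p)) * Real.sqrt (p / (L * q)) = 1 / L := by
  have hL : 0 < L := by linarith
  rw [← Real.sqrt_mul (by positivity),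
    show q / (L * p) * (p / (L * q)) = (1 / L) ^ 2 by field_simp]
  exact Real.sqrt_sq (by positivity)

lemma sum_psi_first {s b e : ℕ} (hsb : s ≤ b) :
    ∑ t ∈ Finset.Icc s b, psi s b e t =
      ((b : ℝ) - s + 1) *
        Real.sqrt (((e : ℝ) - b) / (((e : ℝ) - s + 1) * ((b : ℝ) - s + 1))) := by
  rw [Finset.sum_congr rfl fun t ht =>
      psi_left (Finset.mem_Icc.mp ht).1 (Finset.mem_Icc.mp ht).2,
    sum_const_Icc s b hsb]

lemma sum_psi_second {s b e : ℕ} (hbe : b < e) :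
    ∑ t ∈ Finset.Icc (b + 1) e, psi s b e t =
      ((e : ℝ) - b) *
        -Real.sqrt (((b : ℝ) - s + 1) / (((e : ℝ) - s + 1) * ((e : ℝ) - b))) := by
  rw [Finset.sum_congr rfl fun t ht =>
      psi_right (Finset.mem_Icc.mp ht).1 (Finset.mem_Icc.mp ht).2,
    sum_const_Icc (b + 1) e (by omega)]
  congr 1
  push_cast
  ring

lemma sum_psi_total {s b e : ℕ} (hsb : s ≤ b) (hbe : b < e) :
    ∑ t ∈ Finset.Icc s e, psi s b e t = 0 := by
  have hsbR : (s : ℝ) ≤ b := by exact_mod_cast hsb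
  have hbeR : (b : ℝ) < e := by exact_mod_cast hbe
  rw [sum_split b hsb hbe.le, sum_psi_first hsb, sum_psi_second hbe]
  have h := sqrt_fact1 ((e : ℝ) - s + 1) ((b : ℝ) - s + 1) ((e : ℝ) - b)
    (by linarith) (by linarith) (by ring)
  linear_combination h

lemma inner_eq_cusum (T s b e : ℕ) (hs : 1 ≤ s) (hsb : s ≤ b) (hbe : b < e) (heT : e ≤ T)
    (x : ℕ → ℝ) : innerT T x (psi s b e) = cusum x s b e := by
  unfold innerT cusum
  rw [sum_restrict T s b e hs hsb hbe.le heT, sum_split b hsb hbe.le]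
  have e1 : ∑ t ∈ Finset.Icc s b, x t * psi s b e t =
      (∑ t ∈ Finset.Icc s b, x t) *
        Real.sqrt (((e : ℝ) - b) / (((e : ℝ) - s + 1) * ((b : ℝ) - s + 1))) := by
    rw [Finset.sum_mul]
    exact Finset.sum_congr rfl fun t ht => by
      rw [psi_left (Finset.mem_Icc.mp ht).1 (Finset.mem_Icc.mp ht).2]
  have e2 : ∑ t ∈ Finset.Icc (b + 1) e, x t * psi s b e t =
      (∑ t ∈ Finset.Icc (b + 1) e, x t) *
        -Real.sqrt (((b : ℝ) - s + 1) / (((e : ℝ) - s + 1) * ((e : ℝ) - b))) := by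
    rw [Finset.sum_mul]
    exact Finset.sum_congr rfl fun t ht => by
      rw [psi_right (Finset.mem_Icc.mp ht).1 (Finset.mem_Icc.mp ht).2]
  rw [e1, e2]
  ring

set_option maxHeartbeats 1000000 in
/-- for a signal with exactly one change-point `r` on `[s, e]`,
`‖ψ^b_{s,e}·⟨f, ψ^b_{s,e}⟩ − ψ^r_{s,e}·⟨f, ψ^r_{s,e}⟩‖₂² = (f̃^r_{s,e})² − (f̃^b_{s,e})²`. -/
theorem statement0 (T s r e : ℕ) (hT : 2 ≤ T) (hs : 1 ≤ s) (hsr : s ≤ r) (hre : r < e)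
    (heT : e ≤ T) (f : ℕ → ℝ) (μ₁ μ₂ Δ : ℝ) (hμ : μ₁ ≠ μ₂)
    (hf₁ : ∀ t, s ≤ t → t ≤ r → f t = μ₁) (hf₂ : ∀ t, r + 1 ≤ t → t ≤ e → f t = μ₂)
    (hΔ : Δ = |μ₂ - μ₁|) :
    ∀ b, s ≤ b → b < e →
      normSqT T (fun t =>
          psi s b e t * innerT T f (psi s b e) - psi s r e t * innerT T f (psi s r e)) =
        (cusum f s r e) ^ 2 - (cusum f s b e) ^ 2 := by
  intro b hsb hbe
  have hsbR : (s : ℝ) ≤ b := by exact_mod_cast hsb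
  have hbeR : (b : ℝ) < e := by exact_mod_cast hbe
  have hsrR : (s : ℝ) ≤ r := by exact_mod_cast hsr
  have hreR : (r : ℝ) < e := by exact_mod_cast hre
  have hp : (0:ℝ) < (b : ℝ) - s + 1 := by linarith
  have hq : (0:ℝ) < (e : ℝ) - b := by linarith
  have hp' : (0:ℝ) < (r : ℝ) - s + 1 := by linarith
  have hq' : (0:ℝ) < (e : ℝ) - r := by linarith
  have hL : (0:ℝ) < (e : ℝ) - s + 1 := by linarith
  set a' : ℝ := Real.sqrt (((e : ℝ) - r) / (((e : ℝ) - s + 1) * ((r : ℝ) - s + 1))) with ha'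
  set c' : ℝ := Real.sqrt (((r : ℝ) - s + 1) / (((e : ℝ) - s + 1) * ((e : ℝ) - r))) with hc'
  set Sb : ℝ := ∑ t ∈ Finset.Icc s r, psi s b e t with hSb
  -- block sums of psi_b around r
  have hSb' : ∑ t ∈ Finset.Icc (r + 1) e, psi s b e t = -Sb := by
    have h0 := sum_psi_total hsb hbe
    rw [sum_split r hsr hre.le] at h0
    rw [hSb]; linarith
  -- Cb and Cr
  have hCb : innerT T f (psi s b e) = (μ₁ - μ₂) * Sb := by
    unfold innerT
    rw [sum_restrict T s b e hs hsb hbe.le heT, sum_split r hsr hre.le]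
    have e1 : ∑ t ∈ Finset.Icc s r, f t * psi s b e t =
        μ₁ * ∑ t ∈ Finset.Icc s r, psi s b e t := by
      rw [Finset.mul_sum]
      exact Finset.sum_congr rfl fun t ht => by
        rw [hf₁ t (Finset.mem_Icc.mp ht).1 (Finset.mem_Icc.mp ht).2]
    have e2 : ∑ t ∈ Finset.Icc (r + 1) e, f t * psi s b e t =
        μ₂ * ∑ t ∈ Finset.Icc (r + 1) e, psi s b e t := by
      rw [Finset.mul_sum]
      exact Finset.sum_congr rfl fun t ht => by
        rw [hf₂ t (Finset.mem_Icc.mp ht).1 (Finset.mem_Icc.mp ht).2]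
    rw [e1, e2, hSb']
    ring
  have hCr : innerT T f (psi s r e) = (μ₁ - μ₂) * (((r : ℝ) - s + 1) * a') := by
    unfold innerT
    rw [sum_restrict T s r e hs hsr hre.le heT, sum_split r hsr hre.le]
    have e1 : ∑ t ∈ Finset.Icc s r, f t * psi s r e t =
        μ₁ * ∑ t ∈ Finset.Icc s r, psi s r e t := by
      rw [Finset.mul_sum]
      exact Finset.sum_congr rfl fun t ht => by
        rw [hf₁ t (Finset.mem_Icc.mp ht).1 (Finset.mem_Icc.mp ht).2]
    have e2 : ∑ t ∈ Finset.Icc (r + 1) e, f t * psi s r e t =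
        μ₂ * ∑ t ∈ Finset.Icc (r + 1) e, psi s r e t := by
      rw [Finset.mul_sum]
      exact Finset.sum_congr rfl fun t ht => by
        rw [hf₂ t (Finset.mem_Icc.mp ht).1 (Finset.mem_Icc.mp ht).2]
    rw [e1, e2, sum_psi_first hsr, sum_psi_second hre, ← ha', ← hc']
    have h1 := sqrt_fact1 ((e : ℝ) - s + 1) ((r : ℝ) - s + 1) ((e : ℝ) - r) hp' hq' (by ring)
    rw [← ha', ← hc'] at h1
    linear_combination μ₂ * h1
  -- norms
  have hNb : ∑ t ∈ Finset.Icc 1 T, psi s b e t * psi s b e t = 1 := by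
    rw [sum_restrict T s b e hs hsb hbe.le heT, sum_split b hsb hbe.le]
    have e1 : ∑ t ∈ Finset.Icc s b, psi s b e t * psi s b e t =
        Real.sqrt (((e : ℝ) - b) / (((e : ℝ) - s + 1) * ((b : ℝ) - s + 1))) *
          ∑ t ∈ Finset.Icc s b, psi s b e t := by
      rw [Finset.mul_sum]
      exact Finset.sum_congr rfl fun t ht => by
        rw [psi_left (Finset.mem_Icc.mp ht).1 (Finset.mem_Icc.mp ht).2]
    have e2 : ∑ t ∈ Finset.Icc (b + 1) e, psi s b e t * psi s b e t =
        -Real.sqrt (((b : ℝ) - s + 1) / (((e : ℝ) - s + 1) * ((e : ℝ) - b))) *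
          ∑ t ∈ Finset.Icc (b + 1) e, psi s b e t := by
      rw [Finset.mul_sum]
      exact Finset.sum_congr rfl fun t ht => by
        rw [psi_right (Finset.mem_Icc.mp ht).1 (Finset.mem_Icc.mp ht).2]
    rw [e1, e2, sum_psi_first hsb, sum_psi_second hbe]
    have h2 : Real.sqrt (((e : ℝ) - b) / (((e : ℝ) - s + 1) * ((b : ℝ) - s + 1))) ^ 2 =
        ((e : ℝ) - b) / (((e : ℝ) - s + 1) * ((b : ℝ) - s + 1)) :=
      Real.sq_sqrt (by positivity)
    have h3 : Real.sqrt (((b : ℝ) - s + 1) / (((e : ℝ) - s + 1) * ((e : ℝ) - b))) ^ 2 =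
        ((b : ℝ) - s + 1) / (((e : ℝ) - s + 1) * ((e : ℝ) - b)) :=
      Real.sq_sqrt (by positivity)
    have hsum : ((e : ℝ) - b) / (((e : ℝ) - s + 1) * ((b : ℝ) - s + 1)) * ((b : ℝ) - s + 1)
        + ((b : ℝ) - s + 1) / (((e : ℝ) - s + 1) * ((e : ℝ) - b)) * ((e : ℝ) - b) = 1 := by
      field_simp
      ring
    linear_combination ((b : ℝ) - s + 1) * h2 + ((e : ℝ) - b) * h3 + hsum
  have hNr : ∑ t ∈ Finset.Icc 1 T, psi s r e t * psi s r e t = 1 := by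
    rw [sum_restrict T s r e hs hsr hre.le heT, sum_split r hsr hre.le]
    have e1 : ∑ t ∈ Finset.Icc s r, psi s r e t * psi s r e t =
        a' * ∑ t ∈ Finset.Icc s r, psi s r e t := by
      rw [Finset.mul_sum]
      exact Finset.sum_congr rfl fun t ht => by
        rw [psi_left (Finset.mem_Icc.mp ht).1 (Finset.mem_Icc.mp ht).2, ← ha']
    have e2 : ∑ t ∈ Finset.Icc (r + 1) e, psi s r e t * psi s r e t =
        -c' * ∑ t ∈ Finset.Icc (r + 1) e, psi s r e t := by
      rw [Finset.mul_sum]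
      exact Finset.sum_congr rfl fun t ht => by
        rw [psi_right (Finset.mem_Icc.mp ht).1 (Finset.mem_Icc.mp ht).2, ← hc']
    rw [e1, e2, sum_psi_first hsr, sum_psi_second hre, ← ha', ← hc']
    have h2 : a' ^ 2 = ((e : ℝ) - r) / (((e : ℝ) - s + 1) * ((r : ℝ) - s + 1)) := by
      rw [ha']; exact Real.sq_sqrt (by positivity)
    have h3 : c' ^ 2 = ((r : ℝ) - s + 1) / (((e : ℝ) - s + 1) * ((e : ℝ) - r)) := by
      rw [hc']; exact Real.sq_sqrt (by positivity)
    have hsum : ((e : ℝ) - r) / (((e : ℝ) - s + 1) * ((r : ℝ) - s + 1)) * ((r : ℝ) - s + 1)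
        + ((r : ℝ) - s + 1) / (((e : ℝ) - s + 1) * ((e : ℝ) - r)) * ((e : ℝ) - r) = 1 := by
      field_simp
      ring
    linear_combination ((r : ℝ) - s + 1) * h2 + ((e : ℝ) - r) * h3 + hsum
  -- cross term
  have hX : ∑ t ∈ Finset.Icc 1 T, psi s b e t * psi s r e t = (a' + c') * Sb := by
    rw [sum_restrict T s r e hs hsr hre.le heT (psi s b e), sum_split r hsr hre.le]
    have e1 : ∑ t ∈ Finset.Icc s r, psi s b e t * psi s r e t =
        a' * ∑ t ∈ Finset.Icc s r, psi s b e t := by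
      rw [Finset.mul_sum]
      exact Finset.sum_congr rfl fun t ht => by
        rw [psi_left (Finset.mem_Icc.mp ht).1 (Finset.mem_Icc.mp ht).2 (s := s) (b := r),
          ← ha']
        ring
    have e2 : ∑ t ∈ Finset.Icc (r + 1) e, psi s b e t * psi s r e t =
        -c' * ∑ t ∈ Finset.Icc (r + 1) e, psi s b e t := by
      rw [Finset.mul_sum]
      exact Finset.sum_congr rfl fun t ht => by
        rw [psi_right (Finset.mem_Icc.mp ht).1 (Finset.mem_Icc.mp ht).2 (s := s) (b := r),
          ← hc']
        ring
    rw [e1, e2, hSb', ← hSb]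
    ring
  -- key scalar identity
  have hkey : ((r : ℝ) - s + 1) * a' * (a' + c') = 1 := by
    have h2 : a' ^ 2 = ((e : ℝ) - r) / (((e : ℝ) - s + 1) * ((r : ℝ) - s + 1)) := by
      rw [ha']; exact Real.sq_sqrt (by positivity)
    have hac : a' * c' = 1 / ((e : ℝ) - s + 1) := by
      rw [ha', hc']
      exact sqrt_fact3 ((e : ℝ) - s + 1) ((r : ℝ) - s + 1) ((e : ℝ) - r) hp' hq' (by ring)
    have expand : ((r : ℝ) - s + 1) * a' * (a' + c') =
        ((r : ℝ) - s + 1) * a' ^ 2 + ((r : ℝ) - s + 1) * (a' * c') := by ring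
    rw [expand, h2, hac]
    field_simp
    ring
  -- final assembly
  rw [← inner_eq_cusum T s b e hs hsb hbe heT f, ← inner_eq_cusum T s r e hs hsr hre heT f]
  set Cb : ℝ := innerT T f (psi s b e) with hCbdef
  set Cr : ℝ := innerT T f (psi s r e) with hCrdef
  unfold normSqT
  have expand : ∑ t ∈ Finset.Icc 1 T, (psi s b e t * Cb - psi s r e t * Cr) ^ 2 =
      Cb ^ 2 * (∑ t ∈ Finset.Icc 1 T, psi s b e t * psi s b e t) +
        Cr ^ 2 * (∑ t ∈ Finset.Icc 1 T, psi s r e t * psi s r e t) -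
        2 * Cb * Cr * (∑ t ∈ Finset.Icc 1 T, psi s b e t * psi s r e t) := by
    rw [Finset.mul_sum, Finset.mul_sum, Finset.mul_sum, ← Finset.sum_add_distrib,
      ← Finset.sum_sub_distrib]
    exact Finset.sum_congr rfl fun t _ => by ring
  rw [expand, hNb, hNr, hX]
  have h1 : Cb * Cr * ((a' + c') * Sb) = Cb ^ 2 := by
    rw [hCb, hCr]
    linear_combination ((μ₁ - μ₂) ^ 2 * Sb ^ 2) * hkey
  linear_combination (-2) * h1
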